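/- For the discretized truncated model D' on {1,…,N}, the evolution d/dt f_i = h Σ_{j=1}^{i−1} f_{i−j} f_j − 2h f_i Σ_{j=1}^{N−i} f_j − f_i + 2 Σ_{j=i}^{N} f_j/(j+1) conserves the discrete mass Σ_{i=1}^N i f_i. -/

import Mathlib

open Finset

private lemma gauss (j : ℕ) : ∑ i ∈ Icc 1 j, (i:ℝ) = j*(j+1)/2 := by
  induction j with
  | zero => simp
  | succ n ih =>
    rw [Finset.sum_Icc_succ_top (by omega)]
    push_cast
    rw [ih]; ring

private lemma swapIcc (N : ℕ) (F : ℕ → ℕ → ℝ) :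
    ∑ i ∈ Icc 1 N, ∑ j ∈ Icc i N, F i j = ∑ j ∈ Icc 1 N, ∑ i ∈ Icc 1 j, F i j := by
  rw [Finset.sum_sigma', Finset.sum_sigma']
  refine sum_nbij' (fun x => ⟨x.2, x.1⟩) (fun x => ⟨x.2, x.1⟩) ?_ ?_ (fun _ _ => rfl)
    (fun _ _ => rfl) (fun _ _ => rfl) <;>
  simp only [Finset.mem_Icc, Sigma.forall, Finset.mem_sigma] <;> omega

private lemma keyB (N : ℕ) (g : ℕ → ℝ) :
    ∑ i ∈ Icc 1 N, (i:ℝ) * (2 * ∑ j ∈ Icc i N, g j / ((j:ℝ)+1))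
      = ∑ i ∈ Icc 1 N, (i:ℝ) * g i := by
  have : ∀ i ∈ Icc 1 N, (i:ℝ) * (2 * ∑ j ∈ Icc i N, g j / ((j:ℝ)+1))
      = ∑ j ∈ Icc i N, (i:ℝ) * (2 * (g j / ((j:ℝ)+1))) := by
    intro i _; rw [Finset.mul_sum, Finset.mul_sum]
  rw [Finset.sum_congr rfl this, swapIcc]
  refine Finset.sum_congr rfl fun j hj => ?_
  rw [← Finset.sum_mul, gauss]
  have : ((j:ℝ)+1) ≠ 0 := by positivity
  field_simp

private lemma keyA (N : ℕ) (g : ℕ → ℝ) :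
    ∑ i ∈ Icc 1 N, (i:ℝ) * ∑ j ∈ Ico 1 i, g (i-j) * g j
      = ∑ i ∈ Icc 1 N, 2 * (i:ℝ) * g i * ∑ j ∈ Icc 1 (N-i), g j := by
  have L : ∑ i ∈ Icc 1 N, (i:ℝ) * ∑ j ∈ Ico 1 i, g (i-j) * g j
      = ∑ x ∈ (Icc 1 N).sigma (fun a => Icc 1 (N-a)), ((x.1:ℝ)+(x.2:ℝ)) * (g x.1 * g x.2) := by
    simp_rw [Finset.mul_sum]
    rw [Finset.sum_sigma']
    refine sum_nbij' (fun x => (⟨x.1 - x.2, x.2⟩ : (_ : ℕ) × ℕ))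
      (fun x => (⟨x.1 + x.2, x.2⟩ : (_ : ℕ) × ℕ)) ?_ ?_ ?_ ?_ ?_
    · simp only [Finset.mem_Icc, Finset.mem_Ico, Sigma.forall, Finset.mem_sigma]; omega
    · simp only [Finset.mem_Icc, Finset.mem_Ico, Sigma.forall, Finset.mem_sigma]; omega
    · rintro ⟨a, b⟩ hab
      simp only [Finset.mem_sigma, Finset.mem_Icc, Finset.mem_Ico] at hab
      have hab2 : a - b + b = a := by omega
      simp [hab2]
    · rintro ⟨a, b⟩ hab
      simp only [Finset.mem_sigma, Finset.mem_Icc, Finset.mem_Ico] at hab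
      have hab2 : a + b - b = a := by omega
      simp [hab2]
    · rintro ⟨a, b⟩ hab
      simp only [Finset.mem_sigma, Finset.mem_Icc, Finset.mem_Ico] at hab
      have h1 : ((a:ℝ)) = ((a-b:ℕ):ℝ) + (b:ℝ) := by
        rw [Nat.cast_sub (by omega : b ≤ a)]; ring
      rw [h1]
  have R : ∀ x ∈ (Icc 1 N).sigma (fun a => Icc 1 (N-a)),
      ((x.1:ℝ)+(x.2:ℝ)) * (g x.1 * g x.2)
        = 2 * (x.1:ℝ) * (g x.1 * g x.2) - ((x.1:ℝ) - (x.2:ℝ)) * (g x.1 * g x.2) := by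
    intro x _; ring
  have SYM : ∑ x ∈ (Icc 1 N).sigma (fun a => Icc 1 (N-a)),
      ((x.1:ℝ) - (x.2:ℝ)) * (g x.1 * g x.2) = 0 := by
    have := Finset.sum_nbij' (s := (Icc 1 N).sigma (fun a => Icc 1 (N-a)))
      (t := (Icc 1 N).sigma (fun a => Icc 1 (N-a)))
      (f := fun x => ((x.1:ℝ) - (x.2:ℝ)) * (g x.1 * g x.2))
      (g := fun x => ((x.2:ℝ) - (x.1:ℝ)) * (g x.2 * g x.1))
      (i := fun x => (⟨x.2, x.1⟩ : (_ : ℕ) × ℕ)) (j := fun x => (⟨x.2, x.1⟩ : (_ : ℕ) × ℕ))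
      (fun x hx => by
        simp only [Finset.mem_sigma, Finset.mem_Icc] at hx ⊢; omega)
      (fun x hx => by
        simp only [Finset.mem_sigma, Finset.mem_Icc] at hx ⊢; omega)
      (fun _ _ => rfl) (fun _ _ => rfl) (fun _ _ => rfl)
    have h2 : ∑ x ∈ (Icc 1 N).sigma (fun a => Icc 1 (N-a)),
        ((x.2:ℝ) - (x.1:ℝ)) * (g x.2 * g x.1)
        = - ∑ x ∈ (Icc 1 N).sigma (fun a => Icc 1 (N-a)),
          ((x.1:ℝ) - (x.2:ℝ)) * (g x.1 * g x.2) := by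
      rw [← Finset.sum_neg_distrib]
      exact Finset.sum_congr rfl fun x _ => by ring
    linarith [this, h2]
  rw [L, Finset.sum_congr rfl R, Finset.sum_sub_distrib, SYM, sub_zero]
  rw [Finset.sum_sigma]
  refine Finset.sum_congr rfl fun i _ => ?_
  rw [Finset.mul_sum]
  exact Finset.sum_congr rfl fun j _ => by ring

/-- The truncated discretized model D' conserves the discrete mass `∑_{i=1}^N i f_i`. -/
theorem stmt_2 (N : ℕ) (h : ℝ) (hh : 0 < h) (f : ℝ → ℕ → ℝ)
    (hODE : ∀ t : ℝ, ∀ i, 1 ≤ i → i ≤ N →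
      HasDerivAt (fun s => f s i)
        (h * (∑ j ∈ Finset.Ico 1 i, f t (i - j) * f t j)
          - 2 * h * f t i * (∑ j ∈ Finset.Icc 1 (N - i), f t j)
          - f t i + 2 * ∑ j ∈ Finset.Icc i N, f t j / ((j : ℝ) + 1)) t) :
    ∀ t : ℝ, HasDerivAt (fun s => ∑ i ∈ Finset.Icc 1 N, (i : ℝ) * f s i) 0 t := by
  intro t
  set g : ℕ → ℝ := f t with hg
  set D : ℕ → ℝ := fun i =>
    h * (∑ j ∈ Finset.Ico 1 i, g (i - j) * g j)
      - 2 * h * g i * (∑ j ∈ Finset.Icc 1 (N - i), g j)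
      - g i + 2 * ∑ j ∈ Finset.Icc i N, g j / ((j : ℝ) + 1) with hD
  have hsum : HasDerivAt (fun s => ∑ i ∈ Finset.Icc 1 N, (i : ℝ) * f s i)
      (∑ i ∈ Finset.Icc 1 N, (i:ℝ) * D i) t := by
    apply HasDerivAt.fun_sum
    intro i hi
    simp only [Finset.mem_Icc] at hi
    exact (hODE t i hi.1 hi.2).const_mul _
  have hzero : ∑ i ∈ Finset.Icc 1 N, (i:ℝ) * D i = 0 := by
    have expand : ∀ i ∈ Finset.Icc 1 N, (i:ℝ) * D i
        = h * ((i:ℝ) * ∑ j ∈ Finset.Ico 1 i, g (i-j) * g j)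
          - h * (2 * (i:ℝ) * g i * ∑ j ∈ Finset.Icc 1 (N-i), g j)
          - (i:ℝ) * g i
          + (i:ℝ) * (2 * ∑ j ∈ Finset.Icc i N, g j / ((j:ℝ)+1)) := by
      intro i _; rw [hD]; ring
    rw [Finset.sum_congr rfl expand]
    rw [Finset.sum_add_distrib, Finset.sum_sub_distrib, Finset.sum_sub_distrib,
      ← Finset.mul_sum, ← Finset.mul_sum, keyA N g, keyB N g]
    ring
  rw [← hzero]
  exact hsum
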